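/- Let A be a reduced Noetherian commutative ring whose integral closure Ā in Q(A) is a finite A-module, let A ⊆ A′ ⊆ Ā be an intermediate ring, and let J be a test ideal for A. Then the radical √(J·A′) of the extension of J to A′ is a test ideal for A′. -/

import Mathlib

set_option synthInstance.maxHeartbeats 1000000
set_option maxHeartbeats 1000000

open scoped nonZeroDivisors

noncomputable section

/-- The conductor of a reduced ring `A` in its integral closure inside `Q(A)`:
`C_A = {a : A | a · Ā ⊆ A}`. -/
def conductorIdeal (A : Type*) [CommRing A] : Ideal A where
  carrier := {a : A | ∀ x ∈ integralClosure A (FractionRing A),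
      algebraMap A (FractionRing A) a * x ∈ (algebraMap A (FractionRing A)).range}
  add_mem' := by
    intro a b ha hb x hx
    rw [map_add, add_mul]
    exact add_mem (ha x hx) (hb x hx)
  zero_mem' := by
    intro x hx
    rw [map_zero, zero_mul]
    exact zero_mem _
  smul_mem' := by
    intro c a ha x hx
    obtain ⟨y, hy⟩ := ha x hx
    refine ⟨c * y, ?_⟩
    rw [map_mul, hy, smul_eq_mul, map_mul, mul_assoc]


/-- A test ideal for `A`. -/
def IsTestIdeal (A : Type*) [CommRing A] (J : Ideal A) : Prop :=
  (∃ g ∈ J, g ∈ A⁰) ∧ J.IsRadical ∧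
    PrimeSpectrum.zeroLocus (conductorIdeal A : Set A) ⊆
      PrimeSpectrum.zeroLocus (J : Set A)

section Aux

/-- Pulling back nonzerodivisors along an injective ring hom. -/
lemma mem_nonZeroDivisors_of_map_mem {R S : Type*} [CommRing R] [CommRing S] {f : R →+* S}
    (hf : Function.Injective f) {x : R} (h : f x ∈ S⁰) : x ∈ R⁰ := by
  rw [mem_nonZeroDivisors_iff_right]
  intro z hz
  have h2 : f z * f x = 0 := by rw [← map_mul, hz, map_zero]
  have h3 := mem_nonZeroDivisors_iff_right.mp h _ h2
  apply hf
  rw [h3, map_zero]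

variable {A : Type*} [CommRing A]

/-- A nonzerodivisor of the total ring of fractions is a unit. -/
lemma isUnit_of_mem_nonZeroDivisors_fractionRing {z : FractionRing A}
    (hz : z ∈ (FractionRing A)⁰) : IsUnit z := by
  obtain ⟨⟨a, s⟩, h⟩ := IsLocalization.surj A⁰ z
  have hu : IsUnit (algebraMap A (FractionRing A) s) := IsLocalization.map_units _ s
  have ha : algebraMap A (FractionRing A) a ∈ (FractionRing A)⁰ := by
    rw [← h]; exact mul_mem hz hu.mem_nonZeroDivisors
  have haA : a ∈ A⁰ := mem_nonZeroDivisors_of_map_mem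
    (IsFractionRing.injective A (FractionRing A)) ha
  have hau : IsUnit (algebraMap A (FractionRing A) a) :=
    IsLocalization.map_units (FractionRing A) (⟨a, haA⟩ : A⁰)
  apply isUnit_of_mul_isUnit_left (y := algebraMap A (FractionRing A) ↑s)
  rw [h]; exact hau

variable (A' : Subalgebra A (FractionRing A))

lemma subalgebra_algebraMap_injective :
    Function.Injective (algebraMap ↥A' (FractionRing A)) :=
  fun x y h => Subtype.ext h

lemma subalgebra_algebraMap_comm (a : A) :
    algebraMap ↥A' (FractionRing A) (algebraMap A ↥A' a)
      = algebraMap A (FractionRing A) a :=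
  A'.val.commutes a

lemma map_mem_nonZeroDivisors_subalgebra {s : A} (hs : s ∈ A⁰) :
    algebraMap A ↥A' s ∈ (↥A')⁰ := by
  apply mem_nonZeroDivisors_of_map_mem (subalgebra_algebraMap_injective A')
  rw [subalgebra_algebraMap_comm]
  exact (IsLocalization.map_units (FractionRing A) (⟨s, hs⟩ : A⁰)).mem_nonZeroDivisors

lemma coe_mem_nonZeroDivisors_subalgebra {t : ↥A'} (ht : t ∈ (↥A')⁰) :
    algebraMap ↥A' (FractionRing A) t ∈ (FractionRing A)⁰ := by
  rw [mem_nonZeroDivisors_iff_right]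
  intro z hz
  obtain ⟨⟨a, s⟩, h⟩ := IsLocalization.surj A⁰ z
  have hu : IsUnit (algebraMap A (FractionRing A) s) := IsLocalization.map_units _ s
  have key : algebraMap ↥A' (FractionRing A) (algebraMap A ↥A' a * t) = 0 := by
    rw [map_mul, subalgebra_algebraMap_comm, ← h,
      mul_comm z (algebraMap A (FractionRing A) ↑s), mul_assoc, hz, mul_zero]
  have h0 : algebraMap A ↥A' a * t = 0 := by
    apply subalgebra_algebraMap_injective A'
    rw [key, map_zero]
  have ha0 : algebraMap A ↥A' a = 0 := mem_nonZeroDivisors_iff_right.mp ht _ h0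
  have h2 : z * algebraMap A (FractionRing A) ↑s = 0 := by
    rw [h, ← subalgebra_algebraMap_comm A', ha0, map_zero]
  exact (hu.mul_left_eq_zero).mp h2

/-- `Q(A)` is also the total ring of fractions of any intermediate ring `A ⊆ A' ⊆ Q(A)`. -/
lemma isLocalization_subalgebra_fractionRing :
    IsLocalization (↥A')⁰ (FractionRing A) := by
  refine ⟨fun t => isUnit_of_mem_nonZeroDivisors_fractionRing
      (coe_mem_nonZeroDivisors_subalgebra A' t.2), fun z => ?_, fun {x y} h => ?_⟩
  · obtain ⟨⟨a, s⟩, h⟩ := IsLocalization.surj A⁰ z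
    refine ⟨⟨algebraMap A ↥A' a,
      ⟨algebraMap A ↥A' ↑s, map_mem_nonZeroDivisors_subalgebra A' s.2⟩⟩, ?_⟩
    simpa only [subalgebra_algebraMap_comm] using h
  · exact ⟨1, by rw [subalgebra_algebraMap_injective A' h]⟩

end Aux

/-- Let `A` be a reduced Noetherian ring with finite normalization,
let `A ⊆ A′ ⊆ Ā` be an intermediate ring (a subalgebra of `Q(A)` contained in the
integral closure of `A`), and let `J` be a test ideal for `A`. Then `√(J·A′)` is a
test ideal for `A′`. -/
theorem radical_extension_is_test_ideal
    (A : Type*) [CommRing A] [IsReduced A] [IsNoetherianRing A]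
    [Module.Finite A (integralClosure A (FractionRing A))]
    (A' : Subalgebra A (FractionRing A))
    (hA' : A' ≤ integralClosure A (FractionRing A))
    (J : Ideal A) (hJ : IsTestIdeal A J) :
    IsTestIdeal A' ((J.map (algebraMap A A')).radical) := by
  obtain ⟨⟨g, hgJ, hg⟩, _, hV⟩ := hJ
  haveI hloc : IsLocalization (↥A')⁰ (FractionRing A) :=
    isLocalization_subalgebra_fractionRing A'
  haveI : Algebra.IsIntegral A ↥A' := ⟨fun x =>
    (isIntegral_algHom_iff A'.val Subtype.val_injective).mp (hA' x.2)⟩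
  let e : FractionRing ↥A' ≃ₐ[↥A'] FractionRing A :=
    IsLocalization.algEquiv (↥A')⁰ (FractionRing ↥A') (FractionRing A)
  refine ⟨⟨algebraMap A ↥A' g, Ideal.le_radical (Ideal.mem_map_of_mem _ hgJ),
    map_mem_nonZeroDivisors_subalgebra A' hg⟩, Ideal.radical_isRadical _, ?_⟩
  intro P hP
  rw [PrimeSpectrum.mem_zeroLocus] at hP ⊢
  haveI := P.2
  have hcond : conductorIdeal A ≤ Ideal.comap (algebraMap A ↥A') P.asIdeal := by
    intro a ha
    show algebraMap A ↥A' a ∈ P.asIdeal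
    apply hP
    intro x hx
    have hx' : IsIntegral ↥A' x := hx
    have hex : IsIntegral ↥A' (e x) := hx'.map e.toAlgHom
    have heA : IsIntegral A (e x) := isIntegral_trans (e x) hex
    obtain ⟨b, hb⟩ := ha (e x) heA
    refine ⟨algebraMap A ↥A' b, ?_⟩
    apply e.injective
    rw [map_mul, e.commutes, e.commutes, subalgebra_algebraMap_comm,
      subalgebra_algebraMap_comm]
    exact hb
  have hJle : (J : Set A) ⊆ (Ideal.comap (algebraMap A ↥A') P.asIdeal : Set A) :=
    hV (show (⟨Ideal.comap (algebraMap A ↥A') P.asIdeal, inferInstance⟩ : PrimeSpectrum A)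
      ∈ PrimeSpectrum.zeroLocus _ from (PrimeSpectrum.mem_zeroLocus _ _).mpr hcond)
  exact P.2.radical_le_iff.mpr (Ideal.map_le_iff_le_comap.mpr hJle)
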